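/- Let A be a graded-commutative differential algebra over ℝ with differential d. Define a bracket on homogeneous elements by [α, β] = (−1)^a d(αβ) for α ∈ A_a, β ∈ A_b, and assign to elements of A_a the shifted degree −(a+1). Then: (1) [A_a, A_b] ⊆ A_{a+b+1}, so the bracket shifts the assigned degrees additively; (2) [α, β] + (−1)^{(a+1)(b+1)} [β, α] = 0 for all α ∈ A_a, β ∈ A_b; (3) (−1)^{(a+1)(c+1)}[[α,β],γ] + (−1)^{(b+1)(a+1)}[[β,γ],α] + (−1)^{(c+1)(b+1)}[[γ,α],β] = 0 for all α ∈ A_a, β ∈ A_b, γ ∈ A_c. In other words, A with this bracket and grading is a ℤ-graded Lie superalgebra over ℝ. -/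

import Mathlib

/-- A graded-commutative differential algebra over ℝ. -/
structure GradedCommDiffAlgebra (A : Type*) [Ring A] [Algebra ℝ A] where
  grading : ℕ → Submodule ℝ A
  internal : DirectSum.IsInternal grading
  mul_mem : ∀ a b : ℕ, ∀ x ∈ grading a, ∀ y ∈ grading b, x * y ∈ grading (a + b)
  comm : ∀ (a b : ℕ) (x y : A), x ∈ grading a → y ∈ grading b →
    x * y = ((-1 : ℝ) ^ (a * b)) • (y * x)
  d : A →ₗ[ℝ] A
  d_grade : ∀ j : ℕ, ∀ x ∈ grading j, d x ∈ grading (j + 1)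
  d_d : ∀ x : A, d (d x) = 0
  leibniz : ∀ (a : ℕ) (x y : A), x ∈ grading a →
    d (x * y) = d x * y + ((-1 : ℝ) ^ a) • (x * d y)

/-- The bracket `[α, β] = (−1)^a d(αβ)` for `α` of form-degree `a`. -/
def GradedCommDiffAlgebra.br {A : Type*} [Ring A] [Algebra ℝ A]
    (G : GradedCommDiffAlgebra A) (a : ℕ) (x y : A) : A :=
  ((-1 : ℝ) ^ a) • G.d (x * y)


lemma neg_one_pow_sum (m n : ℕ) (h : Odd (m + n)) : (-1:ℝ)^m + (-1)^n = 0 := by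
  have h1 : (-1:ℝ)^(m+n) = -1 := h.neg_one_pow
  rw [pow_add] at h1
  rcases Nat.even_or_odd m with hm | hm <;> rcases Nat.even_or_odd n with hn | hn <;>
    rw [hm.neg_one_pow, hn.neg_one_pow] at h1 ⊢ <;> norm_num at *

/-- With the bracket `[α, β] = (−1)^a d(αβ)` and the shifted degree `−(a+1)`
assigned to `A_a`, the algebra of forms becomes a ℤ-graded Lie superalgebra:
the bracket of `A_a` and `A_b` lands in `A_{a+b+1}`, it is graded-antisymmetric
with signs `(−1)^{(a+1)(b+1)}`, and it satisfies the graded Jacobi identity. -/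
theorem forms_lie_superalgebra {A : Type*} [Ring A] [Algebra ℝ A]
    (G : GradedCommDiffAlgebra A) :
    (∀ (a b : ℕ) (α β : A), α ∈ G.grading a → β ∈ G.grading b →
      G.br a α β ∈ G.grading (a + b + 1)) ∧
    (∀ (a b : ℕ) (α β : A), α ∈ G.grading a → β ∈ G.grading b →
      G.br a α β + ((-1 : ℝ) ^ ((a + 1) * (b + 1))) • G.br b β α = 0) ∧
    (∀ (a b c : ℕ) (α β γ : A),
      α ∈ G.grading a → β ∈ G.grading b → γ ∈ G.grading c →
      ((-1 : ℝ) ^ ((a + 1) * (c + 1))) • G.br (a + b + 1) (G.br a α β) γ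
        + ((-1 : ℝ) ^ ((b + 1) * (a + 1))) • G.br (b + c + 1) (G.br b β γ) α
        + ((-1 : ℝ) ^ ((c + 1) * (b + 1))) • G.br (c + a + 1) (G.br c γ α) β
        = 0) := by
  refine ⟨?_, ?_, ?_⟩
  · intro a b α β hα hβ
    exact Submodule.smul_mem _ _ (G.d_grade _ _ (G.mul_mem a b α hα β hβ))
  · intro a b α β hα hβ
    have hc : β * α = ((-1:ℝ)^(a*b)) • (α * β) := by
      rw [G.comm a b α β hα hβ, smul_smul, ← pow_add]
      rw [Even.neg_one_pow ⟨a*b, rfl⟩, one_smul]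
    simp only [GradedCommDiffAlgebra.br, hc, map_smul, smul_smul, ← pow_add]
    rw [← add_smul]
    rw [neg_one_pow_sum _ _ ⟨a + a*b + b, by ring⟩, zero_smul]
  · intro a b c α β γ hα hβ hγ
    have hαβ := G.mul_mem a b α hα β hβ
    have hβγ := G.mul_mem b c β hβ γ hγ
    have hγα := G.mul_mem c a γ hγ α hα
    have hdαβ := G.d_grade _ _ hαβ
    have hdβγ := G.d_grade _ _ hβγ
    have hdγα := G.d_grade _ _ hγα
    simp only [GradedCommDiffAlgebra.br, smul_mul_assoc, map_smul]
    rw [G.leibniz (a+b+1) _ γ hdαβ, G.leibniz (b+c+1) _ α hdβγ, G.leibniz (c+a+1) _ β hdγα]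
    simp only [G.d_d, zero_mul, zero_add, smul_smul]
    rw [G.leibniz a α β hα, G.leibniz b β γ hβ, G.leibniz c γ α hγ]
    simp only [add_mul, smul_mul_assoc, smul_add, smul_smul]
    have hdα := G.d_grade a α hα
    have hdβ := G.d_grade b β hβ
    have hdγ := G.d_grade c γ hγ
    have c1 : β * G.d γ * G.d α
        = ((-1:ℝ)^((b+(c+1))*(a+1))) • (G.d α * β * G.d γ) := by
      rw [G.comm (b+(c+1)) (a+1) _ _ (G.mul_mem _ _ _ hβ _ hdγ) hdα, mul_assoc]
    have c2 : G.d γ * α * G.d β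
        = ((-1:ℝ)^((c+1)*a) * (-1)^((c+1)*(b+1))) • (α * G.d β * G.d γ) := by
      rw [G.comm (c+1) a _ _ hdγ hα, smul_mul_assoc, mul_assoc,
        G.comm (c+1) (b+1) _ _ hdγ hdβ, mul_smul_comm, smul_smul, mul_assoc]
    have c3 : γ * G.d α * G.d β
        = ((-1:ℝ)^((c+(a+1))*(b+1))) • (G.d β * γ * G.d α) := by
      rw [G.comm (c+(a+1)) (b+1) _ _ (G.mul_mem _ _ _ hγ _ hdα) hdβ, mul_assoc]
    rw [c1, c2, c3]
    simp only [smul_smul]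
    match_scalars <;> simp only [mul_one, ← pow_add]
    · exact neg_one_pow_sum _ _ ⟨a*b+a*c+3*a+4*b+2*c+3, by ring⟩
    · exact neg_one_pow_sum _ _ ⟨a*c+b*c+4*a+2*b+3*c+3, by ring⟩
    · exact neg_one_pow_sum _ _ ⟨a*b+b*c+2*a+3*b+4*c+3, by ring⟩
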